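/- Let k, n ≥ 1, let q_1,…,q_k ≥ 1, and let 1/2 < δ ≤ 1. Let X = (X^{(1)},…,X^{(k)}) and Y = (Y^{(1)},…,Y^{(k)}) be independent random variables, where X^{(ℓ)}, Y^{(ℓ)} take values in (F_{2^{q_ℓ}})^n, and suppose both X and Y satisfy the forward block condition: for every ℓ ∈ {1,…,k}, every assignment w of the first ℓ−1 blocks, and every value v ∈ (F_{2^{q_ℓ}})^n, Pr[X^{(ℓ)} = v and (X^{(1)},…,X^{(ℓ−1)}) = w] ≤ 2^{−δ q_ℓ n} · Pr[(X^{(1)},…,X^{(ℓ−1)}) = w], and likewise for Y. Let Z^{(ℓ)} = Ext_IP^{n,q_ℓ}(X^{(ℓ)}, Y^{(ℓ)}). Then the distribution of (Z^{(1)},…,Z^{(k)}) is within statistical distance Σ_{ℓ=1}^k 2^{2 q_ℓ} · 2^{−(2δ−1) q_ℓ n / 2} of the uniform distribution on F_{2^{q_1}} × ⋯ × F_{2^{q_k}}. -/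

import Mathlib

open Finset
set_option linter.unusedSectionVars false
set_option linter.unusedVariables false
set_option maxHeartbeats 1000000

namespace Stmt9Aux


noncomputable def e2 : ZMod 2 → ℝ := fun s => if s = 0 then 1 else -1

lemma e2_cases (s : ZMod 2) : s = 0 ∨ s = 1 := by revert s; decide

lemma e2_zero : e2 0 = 1 := if_pos rfl

lemma e2_add (s t : ZMod 2) : e2 (s + t) = e2 s * e2 t := by
  rcases e2_cases s with hs | hs <;> rcases e2_cases t with ht | ht <;> subst hs <;> subst ht <;>
    simp [e2, show ((1 : ZMod 2) + 1 = 0) from by decide, show ((1 : ZMod 2) ≠ 0) from by decide]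

lemma e2_abs (s : ZMod 2) : |e2 s| = 1 := by
  rcases e2_cases s with hs | hs <;> subst hs <;>
    simp [e2, show ((1 : ZMod 2) ≠ 0) from by decide]

lemma e2_add_one (s : ZMod 2) : e2 (s + 1) = - e2 s := by
  rcases e2_cases s with hs | hs <;> subst hs <;>
    simp [e2, show ((1 : ZMod 2) + 1 = 0) from by decide, show ((1 : ZMod 2) ≠ 0) from by decide]

lemma e2_sum {ι : Type*} (s : Finset ι) (f : ι → ZMod 2) :
    e2 (∑ i ∈ s, f i) = ∏ i ∈ s, e2 (f i) := by
  induction s using Finset.cons_induction with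
  | empty => simp [e2_zero]
  | cons a s ha ih => rw [Finset.sum_cons, Finset.prod_cons, e2_add, ih]

variable {F : Type*} [Field F] [Fintype F] [DecidableEq F]

lemma sum_e2_eq_zero (φ : F →+ ZMod 2) (x₀ : F) (hx₀ : φ x₀ = 1) (c : F) (hc : c ≠ 0) :
    ∑ x : F, e2 (φ (c * x)) = 0 := by
  have key : ∑ x : F, e2 (φ (c * x)) = ∑ x : F, e2 (φ (c * (x + c⁻¹ * x₀))) :=
    (Fintype.sum_equiv (Equiv.addRight (c⁻¹ * x₀))
      (fun x => e2 (φ (c * (x + c⁻¹ * x₀)))) (fun x => e2 (φ (c * x))) (fun x => rfl)).symm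
  have h2 : ∀ x : F, e2 (φ (c * (x + c⁻¹ * x₀))) = - e2 (φ (c * x)) := by
    intro x
    rw [mul_add, map_add, mul_inv_cancel_left₀ hc, hx₀, e2_add_one]
  simp only [h2, Finset.sum_neg_distrib] at key
  linarith

lemma sum_e2_mul (φ : F →+ ZMod 2) (x₀ : F) (hx₀ : φ x₀ = 1) (c : F) :
    ∑ x : F, e2 (φ (c * x)) = if c = 0 then (Fintype.card F : ℝ) else 0 := by
  by_cases hc : c = 0
  · subst hc; simp [map_zero, e2_zero]
  · rw [if_neg hc, sum_e2_eq_zero φ x₀ hx₀ c hc]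

lemma exists_phi (q : ℕ) (hq : 1 ≤ q) (hcard : Fintype.card F = 2 ^ q) :
    ∃ φ : F →+ ZMod 2, ∃ x₀ : F, φ x₀ = 1 := by
  have hp2 : CharP F 2 := by
    obtain ⟨p, hpc⟩ := CharP.exists F
    haveI := hpc
    obtain ⟨m, hprime, hm⟩ := FiniteField.card F p
    have hdvd : p ∣ 2 ^ q := by
      rw [← hcard, hm]
      exact dvd_pow_self p m.ne_zero
    have hp : p = 2 := by
      rcases (Nat.Prime.eq_one_or_self_of_dvd Nat.prime_two p
        (hprime.dvd_of_dvd_pow hdvd)).symm with h | h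
      · exact h.symm ▸ rfl
      · exact absurd h hprime.ne_one
    exact hp ▸ hpc
  haveI := hp2
  letI : Algebra (ZMod 2) F := ZMod.algebra _ _
  have hnt : Nontrivial F := inferInstance
  have hfr : 0 < Module.finrank (ZMod 2) F := Module.finrank_pos
  let b := Module.finBasis (ZMod 2) F
  refine ⟨(b.coord ⟨0, hfr⟩).toAddMonoidHom, b ⟨0, hfr⟩, ?_⟩
  simp [Module.Basis.coord_apply]


variable {F : Type*} [Field F] [Fintype F] [DecidableEq F]

lemma ind_sub (φ : F →+ ZMod 2) (x₀ : F) (hx₀ : φ x₀ = 1) (u ζ : F) :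
    (if u = ζ then (1 : ℝ) else 0) - (Fintype.card F : ℝ)⁻¹
      = (Fintype.card F : ℝ)⁻¹ * ∑ a ∈ Finset.univ.erase (0 : F), e2 (φ (a * (u - ζ))) := by
  have hQ0 : (Fintype.card F : ℝ) ≠ 0 := Nat.cast_ne_zero.mpr Fintype.card_ne_zero
  have hfull : ∑ a : F, e2 (φ (a * (u - ζ))) = if u - ζ = 0 then (Fintype.card F : ℝ) else 0 := by
    have := sum_e2_mul φ x₀ hx₀ (u - ζ)
    rw [← this]
    exact Finset.sum_congr rfl fun a _ => by rw [mul_comm]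
  have hsplit : ∑ a : F, e2 (φ (a * (u - ζ)))
      = e2 (φ ((0 : F) * (u - ζ))) + ∑ a ∈ Finset.univ.erase (0 : F), e2 (φ (a * (u - ζ))) :=
    (Finset.add_sum_erase _ _ (mem_univ 0)).symm
  have h0 : e2 (φ ((0 : F) * (u - ζ))) = 1 := by rw [zero_mul, map_zero, e2_zero]
  have hiff : (u = ζ) ↔ (u - ζ = 0) := sub_eq_zero.symm
  rw [h0] at hsplit
  have herase : ∑ a ∈ Finset.univ.erase (0 : F), e2 (φ (a * (u - ζ)))
      = (if u - ζ = 0 then (Fintype.card F : ℝ) else 0) - 1 := by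
    rw [← hfull, hsplit]; ring
  rw [herase]
  by_cases h : u = ζ
  · rw [if_pos h, if_pos (hiff.mp h)]
    field_simp
  · rw [if_neg h, if_neg (fun hc => h (hiff.mpr hc))]
    field_simp
    ring

variable {F : Type*} [Field F] [Fintype F] [DecidableEq F]

lemma block (n q : ℕ) (δ : ℝ) (hq : 1 ≤ q) (hF : Fintype.card F = 2 ^ q)
    (P1 P2 : (Fin n → F) → ℝ) (h10 : ∀ v, 0 ≤ P1 v) (h20 : ∀ v, 0 ≤ P2 v)
    (p p' : ℝ) (h1s : ∑ v, P1 v = p) (h2s : ∑ v, P2 v = p')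
    (h1b : ∀ v, P1 v ≤ (2 : ℝ) ^ (-(δ * q * n)) * p)
    (h2b : ∀ v, P2 v ≤ (2 : ℝ) ^ (-(δ * q * n)) * p') :
    (1 / 2) * ∑ ζ : F, |∑ v, ∑ v', P1 v * P2 v' *
        ((if (∑ i, v i * v' i) = ζ then (1 : ℝ) else 0) - (Fintype.card F : ℝ)⁻¹)|
      ≤ p * p' * ((2 : ℝ) ^ (2 * (q : ℝ)) * (2 : ℝ) ^ (-(2 * δ - 1) * (q : ℝ) * (n : ℝ) / 2)) := by
  classical
  obtain ⟨φ, x₀, hx₀⟩ := exists_phi q hq hF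
  set β : ℝ := (2 : ℝ) ^ (-(δ * q * n)) with hβ
  have hβ0 : 0 ≤ β := le_of_lt (Real.rpow_pos_of_pos two_pos _)
  have hp0 : 0 ≤ p := h1s ▸ Finset.sum_nonneg fun v _ => h10 v
  have hp'0 : 0 ≤ p' := h2s ▸ Finset.sum_nonneg fun v _ => h20 v
  set Q : ℝ := (Fintype.card F : ℝ) with hQdef
  have hQpos : 0 < Q := by
    rw [hQdef]; exact_mod_cast Fintype.card_pos
  set S : F → ℝ := fun a => ∑ v, ∑ v', P1 v * P2 v' * e2 (φ (a * (∑ i, v i * v' i))) with hSdef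
  set M : ℝ := β * Real.sqrt (Q ^ n) * (p * p') with hMdef
  have hMnn : 0 ≤ M := by
    rw [hMdef]; positivity
  -- key character sum bound
  have hSbound : ∀ a : F, a ≠ 0 → |S a| ≤ M := by
    intro a ha
    set T : (Fin n → F) → ℝ := fun v => ∑ v', P2 v' * e2 (φ (a * ∑ i, v i * v' i)) with hTdef
    have hST : S a = ∑ v, P1 v * T v := by
      rw [hSdef, hTdef]
      exact Finset.sum_congr rfl fun v _ => by rw [Finset.mul_sum]; exact Finset.sum_congr rfl fun v' _ => by ring
    have hCS : (S a) ^ 2 ≤ p * ∑ v, P1 v * (T v) ^ 2 := by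
      have h := Finset.sum_mul_sq_le_sq_mul_sq Finset.univ
        (fun v => Real.sqrt (P1 v)) (fun v => Real.sqrt (P1 v) * T v)
      have e1 : ∀ v : Fin n → F, Real.sqrt (P1 v) * (Real.sqrt (P1 v) * T v) = P1 v * T v :=
        fun v => by rw [← mul_assoc, Real.mul_self_sqrt (h10 v)]
      have e2' : ∀ v : Fin n → F, Real.sqrt (P1 v) ^ 2 = P1 v := fun v => Real.sq_sqrt (h10 v)
      have e3 : ∀ v : Fin n → F, (Real.sqrt (P1 v) * T v) ^ 2 = P1 v * (T v) ^ 2 :=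
        fun v => by rw [mul_pow, e2' v]
      calc (S a) ^ 2 = (∑ v, Real.sqrt (P1 v) * (Real.sqrt (P1 v) * T v)) ^ 2 := by
            rw [hST]; congr 1; exact (Finset.sum_congr rfl fun v _ => e1 v).symm
        _ ≤ (∑ v, Real.sqrt (P1 v) ^ 2) * ∑ v, (Real.sqrt (P1 v) * T v) ^ 2 := h
        _ = p * ∑ v, P1 v * (T v) ^ 2 := by
            rw [Finset.sum_congr rfl fun v _ => e2' v, h1s,
              Finset.sum_congr rfl fun v _ => e3 v]
    have hT2 : ∑ v, P1 v * (T v) ^ 2 ≤ β * p * ∑ v, (T v) ^ 2 := by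
      rw [Finset.mul_sum]
      exact Finset.sum_le_sum fun v _ => mul_le_mul_of_nonneg_right (h1b v) (sq_nonneg _)
    -- expand T^2
    have hTsq : ∀ v, (T v) ^ 2 = ∑ v', ∑ v'', P2 v' * P2 v'' *
        e2 (φ (a * ∑ i, v i * (v' i + v'' i))) := by
      intro v
      rw [sq, hTdef]
      rw [Finset.sum_mul_sum]
      refine Finset.sum_congr rfl fun v' _ => Finset.sum_congr rfl fun v'' _ => ?_
      have : e2 (φ (a * ∑ i, v i * v' i)) * e2 (φ (a * ∑ i, v i * v'' i))
          = e2 (φ (a * ∑ i, v i * (v' i + v'' i))) := by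
        rw [← e2_add, ← map_add, ← mul_add, ← Finset.sum_add_distrib]
        congr 3
        exact Finset.sum_congr rfl fun i _ => (mul_add _ _ _).symm
      calc P2 v' * e2 (φ (a * ∑ i, v i * v' i)) * (P2 v'' * e2 (φ (a * ∑ i, v i * v'' i)))
          = P2 v' * P2 v'' * (e2 (φ (a * ∑ i, v i * v' i)) * e2 (φ (a * ∑ i, v i * v'' i))) := by ring
        _ = _ := by rw [this]
    have hinner : ∀ d : Fin n → F, (∑ v : Fin n → F, e2 (φ (a * ∑ i, v i * d i)))
        = if d = 0 then Q ^ n else 0 := by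
      intro d
      have h1 : ∀ v : Fin n → F, e2 (φ (a * ∑ i, v i * d i)) = ∏ i, e2 (φ ((a * d i) * v i)) := by
        intro v
        rw [Finset.mul_sum, map_sum, e2_sum]
        refine Finset.prod_congr rfl fun i _ => ?_
        congr 2
        ring
      rw [Finset.sum_congr rfl fun v _ => h1 v]
      have hps : (∑ v ∈ Fintype.piFinset (fun _ : Fin n => (Finset.univ : Finset F)),
          ∏ i, e2 (φ ((a * d i) * v i))) = ∏ i, ∑ t : F, e2 (φ ((a * d i) * t)) :=
        Finset.sum_prod_piFinset (Finset.univ : Finset F) (fun i t => e2 (φ ((a * d i) * t)))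
      rw [Fintype.piFinset_univ] at hps
      rw [hps]
      have h2 : ∀ i : Fin n, (∑ t : F, e2 (φ ((a * d i) * t))) = if d i = 0 then Q else 0 := by
        intro i
        rw [sum_e2_mul φ x₀ hx₀]
        by_cases hdi : d i = 0
        · rw [if_pos hdi, if_pos (by rw [hdi, mul_zero])]
        · rw [if_neg hdi, if_neg (fun hc => hdi ((mul_eq_zero.mp hc).resolve_left ha))]
      rw [Finset.prod_congr rfl fun i _ => h2 i]
      by_cases hd : d = 0
      · rw [if_pos hd]
        have : ∀ i : Fin n, (if d i = 0 then Q else 0) = Q := fun i => if_pos (by rw [hd]; rfl)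
        rw [Finset.prod_congr rfl fun i _ => this i, Finset.prod_const, Finset.card_univ,
          Fintype.card_fin]
      · rw [if_neg hd]
        have : ∃ i, d i ≠ 0 := by
          by_contra hcon
          push_neg at hcon
          exact hd (funext hcon)
        obtain ⟨i, hi⟩ := this
        exact Finset.prod_eq_zero (mem_univ i) (if_neg hi)
    have hTsum : ∑ v, (T v) ^ 2 = Q ^ n * ∑ v', P2 v' * P2 (-v') := by
      rw [Finset.sum_congr rfl fun v _ => hTsq v]
      have hswap : ∑ v : Fin n → F, ∑ v' : Fin n → F, ∑ v'' : Fin n → F,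
            P2 v' * P2 v'' * e2 (φ (a * ∑ i, v i * (v' i + v'' i)))
          = ∑ v' : Fin n → F, ∑ v'' : Fin n → F, P2 v' * P2 v'' *
            (∑ v : Fin n → F, e2 (φ (a * ∑ i, v i * (v' i + v'' i)))) := by
        rw [Finset.sum_comm]
        refine Finset.sum_congr rfl fun v' _ => ?_
        rw [Finset.sum_comm]
        exact Finset.sum_congr rfl fun v'' _ => (Finset.mul_sum _ _ _).symm
      rw [hswap]
      have hrow : ∀ v' : Fin n → F, (∑ v'' : Fin n → F, P2 v' * P2 v'' *
          (∑ v : Fin n → F, e2 (φ (a * ∑ i, v i * (v' i + v'' i)))))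
          = Q ^ n * (P2 v' * P2 (-v')) := by
        intro v'
        have hterm : ∀ v'' : Fin n → F, P2 v' * P2 v'' *
            (∑ v : Fin n → F, e2 (φ (a * ∑ i, v i * (v' i + v'' i))))
            = if v'' = -v' then Q ^ n * (P2 v' * P2 v'') else 0 := by
          intro v''
          rw [hinner fun i => v' i + v'' i]
          by_cases hv : v'' = -v'
          · rw [if_pos hv, if_pos, mul_comm]
            funext i
            rw [hv]
            simp
          · rw [if_neg hv, if_neg, mul_zero]
            intro hc
            apply hv
            funext i
            have h' := congrFun hc i
            simp only [Pi.zero_apply] at h'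
            exact eq_neg_of_add_eq_zero_right h'
        rw [Finset.sum_congr rfl fun v'' _ => hterm v'']
        rw [Finset.sum_ite_eq' Finset.univ (-v') (fun v'' => Q ^ n * (P2 v' * P2 v''))]
        rw [if_pos (Finset.mem_univ _)]
      rw [Finset.sum_congr rfl fun v' _ => hrow v', ← Finset.mul_sum]
    have hP2 : ∑ v', P2 v' * P2 (-v') ≤ p' * (β * p') := by
      calc ∑ v', P2 v' * P2 (-v') ≤ ∑ v', P2 v' * (β * p') :=
            Finset.sum_le_sum fun v' _ => mul_le_mul_of_nonneg_left (h2b (-v')) (h20 v')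
        _ = p' * (β * p') := by rw [← Finset.sum_mul, h2s]
    have hchain : S a ^ 2 ≤ M ^ 2 := by
      calc S a ^ 2 ≤ p * ∑ v, P1 v * (T v) ^ 2 := hCS
        _ ≤ p * (β * p * ∑ v, (T v) ^ 2) := mul_le_mul_of_nonneg_left hT2 hp0
        _ = p * (β * p * (Q ^ n * ∑ v', P2 v' * P2 (-v'))) := by rw [hTsum]
        _ ≤ p * (β * p * (Q ^ n * (p' * (β * p')))) := by
            refine mul_le_mul_of_nonneg_left ?_ hp0
            refine mul_le_mul_of_nonneg_left ?_ (mul_nonneg hβ0 hp0)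
            exact mul_le_mul_of_nonneg_left hP2 (pow_nonneg hQpos.le n)
        _ = M ^ 2 := by
            rw [hMdef, mul_pow, mul_pow, Real.sq_sqrt (pow_nonneg hQpos.le n)]
            ring
    calc |S a| = Real.sqrt (S a ^ 2) := (Real.sqrt_sq_eq_abs _).symm
      _ ≤ Real.sqrt (M ^ 2) := Real.sqrt_le_sqrt hchain
      _ = M := Real.sqrt_sq hMnn
  -- rewrite each statistical-distance term via characters
  have hQne : Q ≠ 0 := ne_of_gt hQpos
  have hD : ∀ ζ : F, |∑ v, ∑ v', P1 v * P2 v' *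
      ((if (∑ i, v i * v' i) = ζ then (1 : ℝ) else 0) - Q⁻¹)| ≤ Q⁻¹ * (Q * M) := by
    intro ζ
    have hsplit : ∀ (b u : F), e2 (φ (b * (u - ζ))) = e2 (φ (b * u)) * e2 (φ (b * (-ζ))) := by
      intro b u
      rw [sub_eq_add_neg, mul_add, map_add, e2_add]
    have hrw : ∑ v, ∑ v', P1 v * P2 v' *
        ((if (∑ i, v i * v' i) = ζ then (1 : ℝ) else 0) - Q⁻¹)
        = ∑ b ∈ Finset.univ.erase (0 : F), Q⁻¹ * (S b * e2 (φ (b * (-ζ)))) := by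
      have step1 : ∀ (v v' : Fin n → F), P1 v * P2 v' *
          ((if (∑ i, v i * v' i) = ζ then (1 : ℝ) else 0) - Q⁻¹)
          = ∑ b ∈ Finset.univ.erase (0 : F),
            Q⁻¹ * (P1 v * P2 v' * e2 (φ (b * (∑ i, v i * v' i))) * e2 (φ (b * (-ζ)))) := by
        intro v v'
        rw [ind_sub φ x₀ hx₀, Finset.mul_sum, Finset.mul_sum]
        refine Finset.sum_congr rfl fun b _ => ?_
        rw [hsplit b (∑ i, v i * v' i)]
        ring
      calc ∑ v, ∑ v', P1 v * P2 v' * ((if (∑ i, v i * v' i) = ζ then (1 : ℝ) else 0) - Q⁻¹)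
          = ∑ v : Fin n → F, ∑ v' : Fin n → F, ∑ b ∈ Finset.univ.erase (0 : F),
            Q⁻¹ * (P1 v * P2 v' * e2 (φ (b * (∑ i, v i * v' i))) * e2 (φ (b * (-ζ)))) :=
            Finset.sum_congr rfl fun v _ => Finset.sum_congr rfl fun v' _ => step1 v v'
        _ = ∑ v : Fin n → F, ∑ b ∈ Finset.univ.erase (0 : F), ∑ v' : Fin n → F,
            Q⁻¹ * (P1 v * P2 v' * e2 (φ (b * (∑ i, v i * v' i))) * e2 (φ (b * (-ζ)))) :=
            Finset.sum_congr rfl fun v _ => Finset.sum_comm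
        _ = ∑ b ∈ Finset.univ.erase (0 : F), ∑ v : Fin n → F, ∑ v' : Fin n → F,
            Q⁻¹ * (P1 v * P2 v' * e2 (φ (b * (∑ i, v i * v' i))) * e2 (φ (b * (-ζ)))) :=
            Finset.sum_comm
        _ = ∑ b ∈ Finset.univ.erase (0 : F), Q⁻¹ * (S b * e2 (φ (b * (-ζ)))) := by
            refine Finset.sum_congr rfl fun b _ => ?_
            rw [hSdef]
            dsimp only
            rw [Finset.sum_mul, Finset.mul_sum]
            refine Finset.sum_congr rfl fun v _ => ?_
            rw [Finset.sum_mul, Finset.mul_sum]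
    rw [hrw]
    have habs : ∀ b : F, |Q⁻¹ * (S b * e2 (φ (b * (-ζ))))| = Q⁻¹ * |S b| := by
      intro b
      rw [abs_mul, abs_mul, e2_abs, mul_one, abs_of_nonneg (inv_nonneg.mpr hQpos.le)]
    calc |∑ b ∈ Finset.univ.erase (0 : F), Q⁻¹ * (S b * e2 (φ (b * (-ζ))))|
        ≤ ∑ b ∈ Finset.univ.erase (0 : F), |Q⁻¹ * (S b * e2 (φ (b * (-ζ))))| :=
          Finset.abs_sum_le_sum_abs _ _
      _ = ∑ b ∈ Finset.univ.erase (0 : F), Q⁻¹ * |S b| :=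
          Finset.sum_congr rfl fun b _ => habs b
      _ ≤ ∑ b ∈ Finset.univ.erase (0 : F), Q⁻¹ * M :=
          Finset.sum_le_sum fun b hb =>
            mul_le_mul_of_nonneg_left (hSbound b (Finset.ne_of_mem_erase hb))
              (inv_nonneg.mpr hQpos.le)
      _ = ((Finset.univ.erase (0 : F)).card : ℝ) * (Q⁻¹ * M) := by
          rw [Finset.sum_const, nsmul_eq_mul]
      _ ≤ Q * (Q⁻¹ * M) := by
          refine mul_le_mul_of_nonneg_right ?_
            (mul_nonneg (inv_nonneg.mpr hQpos.le) hMnn)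
          rw [hQdef]
          exact_mod_cast Finset.card_le_univ _
      _ = Q⁻¹ * (Q * M) := by ring
  -- sum over ζ and conclude
  have hsum : ∑ ζ : F, |∑ v, ∑ v', P1 v * P2 v' *
      ((if (∑ i, v i * v' i) = ζ then (1 : ℝ) else 0) - Q⁻¹)| ≤ Q * M := by
    calc ∑ ζ : F, |∑ v, ∑ v', P1 v * P2 v' *
          ((if (∑ i, v i * v' i) = ζ then (1 : ℝ) else 0) - Q⁻¹)|
        ≤ ∑ _ζ : F, Q⁻¹ * (Q * M) := Finset.sum_le_sum fun ζ _ => hD ζ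
      _ = Q * (Q⁻¹ * (Q * M)) := by
          rw [Finset.sum_const, nsmul_eq_mul, Finset.card_univ, hQdef]
      _ = Q * M := by
          field_simp
  -- final numeric computation
  set E : ℝ := (2 : ℝ) ^ (-(2 * δ - 1) * (q : ℝ) * (n : ℝ) / 2) with hEdef
  have hE0 : 0 ≤ E := le_of_lt (Real.rpow_pos_of_pos two_pos _)
  have hQ2 : Q = (2 : ℝ) ^ ((q : ℝ)) := by
    rw [hQdef, hF, Real.rpow_natCast]
    push_cast
    ring
  have hQn : Q ^ n = (2 : ℝ) ^ ((q : ℝ) * (n : ℝ)) := by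
    rw [hQ2, ← Real.rpow_natCast ((2 : ℝ) ^ ((q : ℝ))) n, ← Real.rpow_mul (by norm_num : (0:ℝ) ≤ 2)]
  have hsqrt : Real.sqrt (Q ^ n) = (2 : ℝ) ^ ((q : ℝ) * (n : ℝ) / 2) := by
    rw [hQn, Real.sqrt_eq_rpow, ← Real.rpow_mul (by norm_num : (0:ℝ) ≤ 2)]
    ring_nf
  have hβE : β * Real.sqrt (Q ^ n) = E := by
    rw [hsqrt, hβ, hEdef, ← Real.rpow_add (by norm_num : (0:ℝ) < 2)]
    congr 1
    ring
  have hMeq : M = E * (p * p') := by rw [hMdef, hβE]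
  have hhalfQ : (1 / 2) * Q ≤ (2 : ℝ) ^ (2 * (q : ℝ)) := by
    have h1 : (1 / 2 : ℝ) * Q ≤ Q := by
      nlinarith
    have h2 : Q ≤ (2 : ℝ) ^ (2 * (q : ℝ)) := by
      rw [hQ2]
      refine Real.rpow_le_rpow_of_exponent_le (by norm_num) ?_
      have : (0 : ℝ) ≤ (q : ℝ) := Nat.cast_nonneg q
      linarith
    linarith
  calc (1 / 2) * ∑ ζ : F, |∑ v, ∑ v', P1 v * P2 v' *
        ((if (∑ i, v i * v' i) = ζ then (1 : ℝ) else 0) - Q⁻¹)|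
      ≤ (1 / 2) * (Q * M) := by linarith [hsum]
    _ = ((1 / 2) * Q) * (E * (p * p')) := by rw [hMeq]; ring
    _ ≤ (2 : ℝ) ^ (2 * (q : ℝ)) * (E * (p * p')) :=
        mul_le_mul_of_nonneg_right hhalfQ (mul_nonneg hE0 (mul_nonneg hp0 hp'0))
    _ = p * p' * ((2 : ℝ) ^ (2 * (q : ℝ)) * E) := by ring

lemma group_sum {α β : Type*} [Fintype β] [DecidableEq β] (s : Finset α)
    (g : α → β) (f : α → ℝ) (A : β → ℝ) :
    ∑ x ∈ s, f x * A (g x) = ∑ b : β, (∑ x ∈ s with g x = b, f x) * A b := by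
  rw [← Finset.sum_fiberwise s g (fun x => f x * A (g x))]
  refine Finset.sum_congr rfl fun b _ => ?_
  rw [Finset.sum_mul]
  refine Finset.sum_congr rfl fun x hx => ?_
  rw [(Finset.mem_filter.mp hx).2]

noncomputable def Hyb (k n : ℕ) (Fq : Fin k → Type*) [∀ ℓ, Field (Fq ℓ)]
    [∀ ℓ, Fintype (Fq ℓ)] [∀ ℓ, DecidableEq (Fq ℓ)]
    (PX PY : (∀ ℓ, Fin n → Fq ℓ) → ℝ) (m : ℕ) (z : ∀ ℓ, Fq ℓ) : ℝ :=
  ∑ x : ∀ ℓ, Fin n → Fq ℓ, ∑ y : ∀ ℓ, Fin n → Fq ℓ, PX x * PY y *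
    ∏ j : Fin k, (if (j : ℕ) < m then (if (∑ i, x j i * y j i) = z j then (1 : ℝ) else 0)
          else (Fintype.card (Fq j) : ℝ)⁻¹)

theorem step (k n : ℕ) (qv : Fin k → ℕ) (hqv : ∀ ℓ, 1 ≤ qv ℓ) (δ : ℝ)
    (Fq : Fin k → Type*) [∀ ℓ, Field (Fq ℓ)] [∀ ℓ, Fintype (Fq ℓ)] [∀ ℓ, DecidableEq (Fq ℓ)]
    (hcard : ∀ ℓ, Fintype.card (Fq ℓ) = 2 ^ qv ℓ)
    (PX PY : (∀ ℓ, Fin n → Fq ℓ) → ℝ)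
    (hPX0 : ∀ a, 0 ≤ PX a) (hPX1 : ∑ a, PX a = 1)
    (hPY0 : ∀ a, 0 ≤ PY a) (hPY1 : ∑ a, PY a = 1)
    (hXblock : ∀ (ℓ : Fin k) (w : ∀ j, Fin n → Fq j) (v : Fin n → Fq ℓ),
      (∑ a ∈ Finset.univ.filter
          (fun a : ∀ j, Fin n → Fq j => (∀ j < ℓ, a j = w j) ∧ a ℓ = v), PX a)
        ≤ (2 : ℝ) ^ (-(δ * qv ℓ * n)) *
          ∑ a ∈ Finset.univ.filter (fun a : ∀ j, Fin n → Fq j => ∀ j < ℓ, a j = w j), PX a)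
    (hYblock : ∀ (ℓ : Fin k) (w : ∀ j, Fin n → Fq j) (v : Fin n → Fq ℓ),
      (∑ a ∈ Finset.univ.filter
          (fun a : ∀ j, Fin n → Fq j => (∀ j < ℓ, a j = w j) ∧ a ℓ = v), PY a)
        ≤ (2 : ℝ) ^ (-(δ * qv ℓ * n)) *
          ∑ a ∈ Finset.univ.filter (fun a : ∀ j, Fin n → Fq j => ∀ j < ℓ, a j = w j), PY a)
    (ℓ : Fin k) :
    (1 / 2) * ∑ z : ∀ j, Fq j,
        |Hyb k n Fq PX PY (ℓ.val + 1) z - Hyb k n Fq PX PY ℓ.val z|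
      ≤ (2 : ℝ) ^ (2 * (qv ℓ : ℝ)) * (2 : ℝ) ^ (-(2 * δ - 1) * (qv ℓ) * n / 2) := by
  classical
  set m : ℕ := ℓ.val with hm
  set β : ℝ := (2 : ℝ) ^ (-(δ * qv ℓ * n)) with hβ
  set Qi : Fin k → ℝ := fun j => (Fintype.card (Fq j) : ℝ) with hQi
  have hQipos : ∀ j, 0 < Qi j := fun j => by
    simp only [hQi]; exact_mod_cast Fintype.card_pos
  set ρ : (∀ j, Fin n → Fq j) → (∀ j, Fin n → Fq j) :=
    fun x j => if j < ℓ then x j else 0 with hρ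
  have hρidem : ∀ x, ρ (ρ x) = ρ x := by
    intro x; funext j; by_cases hj : j < ℓ <;> simp [hρ, hj]
  set V : Type _ := (Fin n → Fq ℓ) with hV
  set P1 : (∀ j, Fin n → Fq j) → V → ℝ :=
    fun w v => ∑ x ∈ Finset.univ.filter fun x => ρ x = w ∧ x ℓ = v, PX x with hP1
  set P2 : (∀ j, Fin n → Fq j) → V → ℝ :=
    fun w v => ∑ y ∈ Finset.univ.filter fun y => ρ y = w ∧ y ℓ = v, PY y with hP2
  set p1 : (∀ j, Fin n → Fq j) → ℝ :=
    fun w => ∑ x ∈ Finset.univ.filter fun x => ρ x = w, PX x with hp1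
  set p2 : (∀ j, Fin n → Fq j) → ℝ :=
    fun w => ∑ y ∈ Finset.univ.filter fun y => ρ y = w, PY y with hp2
  have hsplitfilter1 : ∀ w v, (Finset.univ.filter fun x : ∀ j, Fin n → Fq j => ρ x = w ∧ x ℓ = v)
      = (Finset.univ.filter fun x => ρ x = w).filter (fun x => x ℓ = v) :=
    fun w v => (Finset.filter_filter _ _ _).symm
  have hP10 : ∀ w v, 0 ≤ P1 w v := fun w v => Finset.sum_nonneg fun x _ => hPX0 x
  have hP20 : ∀ w v, 0 ≤ P2 w v := fun w v => Finset.sum_nonneg fun y _ => hPY0 y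
  have hP1s : ∀ w, ∑ v, P1 w v = p1 w := by
    intro w
    simp only [hP1, hp1]
    rw [Finset.sum_congr rfl fun v (_ : v ∈ Finset.univ) => by rw [hsplitfilter1 w v]]
    exact Finset.sum_fiberwise (Finset.univ.filter fun x => ρ x = w) (fun x => x ℓ) PX
  have hP2s : ∀ w, ∑ v, P2 w v = p2 w := by
    intro w
    simp only [hP2, hp2]
    rw [Finset.sum_congr rfl fun v (_ : v ∈ Finset.univ) => by rw [hsplitfilter1 w v]]
    exact Finset.sum_fiberwise (Finset.univ.filter fun y => ρ y = w) (fun y => y ℓ) PY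
  have hp1sum : ∑ w, p1 w = 1 := by
    simp only [hp1]
    rw [Finset.sum_fiberwise Finset.univ ρ PX]
    exact hPX1
  have hp2sum : ∑ w, p2 w = 1 := by
    simp only [hp2]
    rw [Finset.sum_fiberwise Finset.univ ρ PY]
    exact hPY1
  have hp10 : ∀ w, 0 ≤ p1 w := fun w => Finset.sum_nonneg fun x _ => hPX0 x
  have hp20 : ∀ w, 0 ≤ p2 w := fun w => Finset.sum_nonneg fun y _ => hPY0 y
  -- membership characterization of fibers
  have hfib : ∀ (w : ∀ j, Fin n → Fq j), ρ w = w →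
      ∀ a : ∀ j, Fin n → Fq j, (ρ a = w ↔ ∀ j, j < ℓ → a j = w j) := by
    intro w hw a
    constructor
    · intro h j hj
      have h2 := congrFun h j
      simp only [hρ, if_pos hj] at h2
      exact h2
    · intro h
      funext j
      by_cases hj : j < ℓ
      · simp only [hρ, if_pos hj]
        exact h j hj
      · have hwj := congrFun hw j
        simp only [hρ, if_neg hj] at hwj ⊢
        exact hwj
  have hempty : ∀ (w : ∀ j, Fin n → Fq j), ¬ (ρ w = w) →
      (Finset.univ.filter fun x : ∀ j, Fin n → Fq j => ρ x = w) = ∅ := by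
    intro w hw
    rw [Finset.filter_eq_empty_iff]
    intro x _ hpx
    exact hw (by rw [← hpx]; exact hρidem x)
  have hP1b : ∀ w v, P1 w v ≤ β * p1 w := by
    intro w v
    by_cases hw : ρ w = w
    · have e2 : (Finset.univ.filter fun x : ∀ j, Fin n → Fq j => ρ x = w)
          = Finset.univ.filter (fun a => ∀ j < ℓ, a j = w j) :=
        Finset.filter_congr fun a _ => by
          simpa using hfib w hw a
      have e1 : (Finset.univ.filter fun x : ∀ j, Fin n → Fq j => ρ x = w ∧ x ℓ = v)
          = Finset.univ.filter (fun a => (∀ j < ℓ, a j = w j) ∧ a ℓ = v) :=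
        Finset.filter_congr fun a _ => by
          have := hfib w hw a
          constructor
          · rintro ⟨h1, h2⟩; exact ⟨fun j hj => (this.mp h1) j hj, h2⟩
          · rintro ⟨h1, h2⟩; exact ⟨this.mpr h1, h2⟩
      simp only [hP1, hp1]
      rw [e1, e2]
      exact hXblock ℓ w v
    · have h0 : (Finset.univ.filter fun x : ∀ j, Fin n → Fq j => ρ x = w ∧ x ℓ = v) = ∅ := by
        rw [hsplitfilter1 w v, hempty w hw, Finset.filter_empty]
      simp only [hP1, hp1, h0, hempty w hw, Finset.sum_empty, mul_zero, le_refl]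
  have hP2b : ∀ w v, P2 w v ≤ β * p2 w := by
    intro w v
    by_cases hw : ρ w = w
    · have e2 : (Finset.univ.filter fun y : ∀ j, Fin n → Fq j => ρ y = w)
          = Finset.univ.filter (fun a => ∀ j < ℓ, a j = w j) :=
        Finset.filter_congr fun a _ => by
          simpa using hfib w hw a
      have e1 : (Finset.univ.filter fun y : ∀ j, Fin n → Fq j => ρ y = w ∧ y ℓ = v)
          = Finset.univ.filter (fun a => (∀ j < ℓ, a j = w j) ∧ a ℓ = v) :=
        Finset.filter_congr fun a _ => by
          have := hfib w hw a
          constructor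
          · rintro ⟨h1, h2⟩; exact ⟨fun j hj => (this.mp h1) j hj, h2⟩
          · rintro ⟨h1, h2⟩; exact ⟨this.mpr h1, h2⟩
      simp only [hP2, hp2]
      rw [e1, e2]
      exact hYblock ℓ w v
    · have h0 : (Finset.univ.filter fun y : ∀ j, Fin n → Fq j => ρ y = w ∧ y ℓ = v) = ∅ := by
        rw [hsplitfilter1 w v, hempty w hw, Finset.filter_empty]
      simp only [hP2, hp2, h0, hempty w hw, Finset.sum_empty, mul_zero, le_refl]
  have hQiapp : ∀ j, (Fintype.card (Fq j) : ℝ) = Qi j := fun j => rfl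
  set G : (∀ j, Fin n → Fq j) → (∀ j, Fin n → Fq j) → (∀ j, Fq j) → ℝ :=
    fun w w' z => ∏ j ∈ Finset.univ.erase ℓ,
      (if (j : ℕ) < m then (if (∑ i, w j i * w' j i) = z j then (1 : ℝ) else 0)
       else (Qi j)⁻¹) with hGdef
  set D : (∀ j, Fin n → Fq j) → (∀ j, Fin n → Fq j) → Fq ℓ → ℝ :=
    fun w w' ζ => ∑ v, ∑ v', P1 w v * P2 w' v' *
      ((if (∑ i, v i * v' i) = ζ then (1 : ℝ) else 0) - (Qi ℓ)⁻¹) with hDdef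
  have hG0 : ∀ w w' z, 0 ≤ G w w' z := by
    intro w w' z
    simp only [hGdef]
    refine Finset.prod_nonneg fun j _ => ?_
    split_ifs
    · norm_num
    · norm_num
    · exact inv_nonneg.mpr (hQipos j).le
  have hdiff : ∀ (x y : ∀ j, Fin n → Fq j) (z : ∀ j, Fq j),
      (∏ j : Fin k, (if (j : ℕ) < m + 1 then
          (if (∑ i, x j i * y j i) = z j then (1 : ℝ) else 0) else (Qi j)⁻¹))
      - (∏ j : Fin k, (if (j : ℕ) < m then
          (if (∑ i, x j i * y j i) = z j then (1 : ℝ) else 0) else (Qi j)⁻¹))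
      = G x y z * ((if (∑ i, x ℓ i * y ℓ i) = z ℓ then (1 : ℝ) else 0) - (Qi ℓ)⁻¹) := by
    intro x y z
    rw [← Finset.mul_prod_erase Finset.univ _ (Finset.mem_univ ℓ),
        ← Finset.mul_prod_erase Finset.univ _ (Finset.mem_univ ℓ)]
    have hsame : ∀ j ∈ Finset.univ.erase ℓ,
        (if (j : ℕ) < m + 1 then (if (∑ i, x j i * y j i) = z j then (1 : ℝ) else 0)
         else (Qi j)⁻¹)
        = (if (j : ℕ) < m then (if (∑ i, x j i * y j i) = z j then (1 : ℝ) else 0)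
           else (Qi j)⁻¹) := by
      intro j hj
      have hne : (j : ℕ) ≠ m := by
        intro hc
        exact (Finset.ne_of_mem_erase hj) (Fin.ext (by rw [hc, hm]))
      have hiff : ((j : ℕ) < m + 1) ↔ ((j : ℕ) < m) := by omega
      rw [if_congr hiff rfl rfl]
    rw [Finset.prod_congr rfl hsame]
    have hℓm : (ℓ : ℕ) = m := hm.symm
    rw [if_pos (by omega : (ℓ : ℕ) < m + 1), if_neg (by omega : ¬ (ℓ : ℕ) < m)]
    simp only [hGdef]
    ring
  have hGρ : ∀ (x y : ∀ j, Fin n → Fq j) (z : ∀ j, Fq j), G x y z = G (ρ x) (ρ y) z := by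
    intro x y z
    simp only [hGdef]
    refine Finset.prod_congr rfl fun j hj => ?_
    by_cases hjm : (j : ℕ) < m
    · have hjl : j < ℓ := by rw [Fin.lt_def]; omega
      have hx : ρ x j = x j := by simp only [hρ, if_pos hjl]
      have hy : ρ y j = y j := by simp only [hρ, if_pos hjl]
      rw [if_pos hjm, if_pos hjm, hx, hy]
    · rw [if_neg hjm, if_neg hjm]
  have hcoeff1 : ∀ (w : ∀ j, Fin n → Fq j) (v : V),
      (∑ x ∈ Finset.univ with (ρ x, x ℓ) = (w, v), PX x) = P1 w v := by
    intro w v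
    simp only [hP1]
    exact Finset.sum_congr (Finset.filter_congr fun a _ => by rw [Prod.mk.injEq])
      (fun _ _ => rfl)
  have hcoeff2 : ∀ (w : ∀ j, Fin n → Fq j) (v : V),
      (∑ y ∈ Finset.univ with (ρ y, y ℓ) = (w, v), PY y) = P2 w v := by
    intro w v
    simp only [hP2]
    exact Finset.sum_congr (Finset.filter_congr fun a _ => by rw [Prod.mk.injEq])
      (fun _ _ => rfl)
  -- the main pointwise identity
  have hΔ : ∀ z : ∀ j, Fq j,
      Hyb k n Fq PX PY (m + 1) z - Hyb k n Fq PX PY m z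
      = ∑ w, ∑ w', G w w' z * D w w' (z ℓ) := by
    intro z
    have h1 : Hyb k n Fq PX PY (m + 1) z - Hyb k n Fq PX PY m z
        = ∑ x, ∑ y, PX x * PY y * (G (ρ x) (ρ y) z *
            ((if (∑ i, x ℓ i * y ℓ i) = z ℓ then (1 : ℝ) else 0) - (Qi ℓ)⁻¹)) := by
      simp only [Hyb, hQiapp]
      rw [← Finset.sum_sub_distrib]
      refine Finset.sum_congr rfl fun x _ => ?_
      rw [← Finset.sum_sub_distrib]
      refine Finset.sum_congr rfl fun y _ => ?_
      rw [← mul_sub, hdiff x y z, hGρ x y z]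
    rw [h1]
    have h2 : ∀ x : ∀ j, Fin n → Fq j,
        (∑ y, PX x * PY y * (G (ρ x) (ρ y) z *
          ((if (∑ i, x ℓ i * y ℓ i) = z ℓ then (1 : ℝ) else 0) - (Qi ℓ)⁻¹)))
        = PX x * ∑ b : (∀ j, Fin n → Fq j) × V,
            (∑ y ∈ Finset.univ with (ρ y, y ℓ) = b, PY y) *
            (G (ρ x) b.1 z * ((if (∑ i, x ℓ i * b.2 i) = z ℓ then (1 : ℝ) else 0) - (Qi ℓ)⁻¹)) := by
      intro x
      have hg := group_sum Finset.univ (fun y => (ρ y, y ℓ)) PY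
        (fun b => G (ρ x) b.1 z *
          ((if (∑ i, x ℓ i * b.2 i) = z ℓ then (1 : ℝ) else 0) - (Qi ℓ)⁻¹))
      calc (∑ y, PX x * PY y * (G (ρ x) (ρ y) z *
            ((if (∑ i, x ℓ i * y ℓ i) = z ℓ then (1 : ℝ) else 0) - (Qi ℓ)⁻¹)))
          = PX x * ∑ y, PY y * (G (ρ x) (ρ y) z *
            ((if (∑ i, x ℓ i * y ℓ i) = z ℓ then (1 : ℝ) else 0) - (Qi ℓ)⁻¹)) := by
            rw [Finset.mul_sum]
            exact Finset.sum_congr rfl fun y _ => by ring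
        _ = _ := congrArg (fun t => PX x * t) hg
    rw [Finset.sum_congr rfl fun x _ => h2 x]
    have h3 := group_sum Finset.univ (fun x => (ρ x, x ℓ)) PX
      (fun a => ∑ b : (∀ j, Fin n → Fq j) × V,
        (∑ y ∈ Finset.univ with (ρ y, y ℓ) = b, PY y) *
        (G a.1 b.1 z * ((if (∑ i, a.2 i * b.2 i) = z ℓ then (1 : ℝ) else 0) - (Qi ℓ)⁻¹)))
    rw [h3]
    -- split the pair sums and identify with P1, P2, D
    rw [Fintype.sum_prod_type]
    refine Finset.sum_congr rfl fun w _ => ?_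
    -- now : ∑ v, coeff (w,v) * (∑ b ...) = ∑ w', G w w' z * D w w' (z ℓ)
    have h4 : ∀ v : V, (∑ b : (∀ j, Fin n → Fq j) × V,
          (∑ y ∈ Finset.univ with (ρ y, y ℓ) = b, PY y) *
          (G w b.1 z * ((if (∑ i, v i * b.2 i) = z ℓ then (1 : ℝ) else 0) - (Qi ℓ)⁻¹)))
        = ∑ w', ∑ v', P2 w' v' *
            (G w w' z * ((if (∑ i, v i * v' i) = z ℓ then (1 : ℝ) else 0) - (Qi ℓ)⁻¹)) := by
      intro v
      rw [Fintype.sum_prod_type]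
      exact Finset.sum_congr rfl fun w' _ => Finset.sum_congr rfl fun v' _ => by
        rw [hcoeff2 w' v']
    calc (∑ v, (∑ x ∈ Finset.univ with (ρ x, x ℓ) = (w, v), PX x) *
          (∑ b : (∀ j, Fin n → Fq j) × V,
            (∑ y ∈ Finset.univ with (ρ y, y ℓ) = b, PY y) *
            (G w b.1 z * ((if (∑ i, v i * b.2 i) = z ℓ then (1 : ℝ) else 0) - (Qi ℓ)⁻¹))))
        = ∑ v, P1 w v * ∑ w', ∑ v', P2 w' v' *
            (G w w' z * ((if (∑ i, v i * v' i) = z ℓ then (1 : ℝ) else 0) - (Qi ℓ)⁻¹)) := by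
          refine Finset.sum_congr rfl fun v _ => ?_
          rw [hcoeff1 w v, h4 v]
      _ = ∑ v, ∑ w', ∑ v', P1 w v * (P2 w' v' *
            (G w w' z * ((if (∑ i, v i * v' i) = z ℓ then (1 : ℝ) else 0) - (Qi ℓ)⁻¹))) := by
          refine Finset.sum_congr rfl fun v _ => ?_
          rw [Finset.mul_sum]
          refine Finset.sum_congr rfl fun w' _ => ?_
          rw [Finset.mul_sum]
      _ = ∑ w', ∑ v, ∑ v', P1 w v * (P2 w' v' *
            (G w w' z * ((if (∑ i, v i * v' i) = z ℓ then (1 : ℝ) else 0) - (Qi ℓ)⁻¹))) :=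
          Finset.sum_comm
      _ = ∑ w', G w w' z * D w w' (z ℓ) := by
          refine Finset.sum_congr rfl fun w' _ => ?_
          simp only [hDdef]
          rw [Finset.mul_sum]
          refine Finset.sum_congr rfl fun v _ => ?_
          rw [Finset.mul_sum]
          exact Finset.sum_congr rfl fun v' _ => by ring
  -- collapse the z-sum for fixed fibers
  have hzsum : ∀ w w', (∑ z : ∀ j, Fq j, G w w' z * |D w w' (z ℓ)|)
      = ∑ ζ : Fq ℓ, |D w w' ζ| := by
    intro w w'
    set h : ∀ j : Fin k, Fq j → ℝ := fun j =>
      if hj : j = ℓ then (fun ζ => |D w w' (cast (congrArg Fq hj) ζ)|)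
      else (fun ζ => if (j : ℕ) < m then
        (if (∑ i, w j i * w' j i) = ζ then (1 : ℝ) else 0) else (Qi j)⁻¹) with hh
    have hhl : ∀ ζ : Fq ℓ, h ℓ ζ = |D w w' ζ| := by
      intro ζ
      simp [hh]
    have hhj : ∀ j, j ≠ ℓ → ∀ ζ : Fq j, h j ζ
        = (if (j : ℕ) < m then (if (∑ i, w j i * w' j i) = ζ then (1 : ℝ) else 0)
           else (Qi j)⁻¹) := by
      intro j hj ζ
      simp [hh, hj]
    have hfact : ∀ z : ∀ j, Fq j, G w w' z * |D w w' (z ℓ)| = ∏ j : Fin k, h j (z j) := by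
      intro z
      rw [← Finset.mul_prod_erase Finset.univ (fun j => h j (z j)) (Finset.mem_univ ℓ)]
      rw [hhl (z ℓ)]
      rw [Finset.prod_congr rfl (fun j hj => hhj j (Finset.ne_of_mem_erase hj) (z j))]
      simp only [hGdef]
      ring
    rw [Finset.sum_congr rfl fun z _ => hfact z]
    have hps := Finset.prod_univ_sum (fun j : Fin k => (Finset.univ : Finset (Fq j))) h
    rw [Fintype.piFinset_univ] at hps
    rw [← hps]
    rw [← Finset.mul_prod_erase Finset.univ (fun j => ∑ ζ, h j ζ) (Finset.mem_univ ℓ)]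
    have h1 : (∑ ζ, h ℓ ζ) = ∑ ζ, |D w w' ζ| := Finset.sum_congr rfl fun ζ _ => hhl ζ
    have h2 : ∀ j ∈ Finset.univ.erase ℓ, (∑ ζ, h j ζ) = 1 := by
      intro j hj
      rw [Finset.sum_congr rfl fun ζ _ => hhj j (Finset.ne_of_mem_erase hj) ζ]
      by_cases hjm : (j : ℕ) < m
      · simp only [if_pos hjm]
        rw [Finset.sum_ite_eq Finset.univ _ (fun _ => (1 : ℝ)), if_pos (Finset.mem_univ _)]
      · simp only [if_neg hjm]
        rw [Finset.sum_const, nsmul_eq_mul, Finset.card_univ, hQiapp j]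
        exact mul_inv_cancel₀ (ne_of_gt (hQipos j))
    rw [h1, Finset.prod_congr rfl h2, Finset.prod_const_one, mul_one]
  -- per-fiber application of the one-block bound
  set C : ℝ := (2 : ℝ) ^ (2 * (qv ℓ : ℝ)) * (2 : ℝ) ^ (-(2 * δ - 1) * (qv ℓ) * n / 2) with hC
  have hblock : ∀ w w', (1 / 2) * (∑ ζ : Fq ℓ, |D w w' ζ|) ≤ p1 w * p2 w' * C := by
    intro w w'
    have hb := block n (qv ℓ) δ (hqv ℓ) (hcard ℓ) (P1 w) (P2 w') (hP10 w) (hP20 w')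
      (p1 w) (p2 w') (hP1s w) (hP2s w') (hP1b w) (hP2b w')
    simp only [hDdef, hC]
    simp only [hQiapp ℓ] at hb
    exact hb
  -- put everything together
  calc (1 / 2) * ∑ z : ∀ j, Fq j,
        |Hyb k n Fq PX PY (m + 1) z - Hyb k n Fq PX PY m z|
      = (1 / 2) * ∑ z : ∀ j, Fq j, |∑ w, ∑ w', G w w' z * D w w' (z ℓ)| := by
        rw [Finset.sum_congr rfl fun z _ => by rw [hΔ z]]
    _ ≤ (1 / 2) * ∑ z : ∀ j, Fq j, ∑ w, ∑ w', G w w' z * |D w w' (z ℓ)| := by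
        refine mul_le_mul_of_nonneg_left ?_ (by norm_num)
        refine Finset.sum_le_sum fun z _ => ?_
        calc |∑ w, ∑ w', G w w' z * D w w' (z ℓ)|
            ≤ ∑ w, |∑ w', G w w' z * D w w' (z ℓ)| := Finset.abs_sum_le_sum_abs _ _
          _ ≤ ∑ w, ∑ w', |G w w' z * D w w' (z ℓ)| :=
              Finset.sum_le_sum fun w _ => Finset.abs_sum_le_sum_abs _ _
          _ = ∑ w, ∑ w', G w w' z * |D w w' (z ℓ)| :=
              Finset.sum_congr rfl fun w _ => Finset.sum_congr rfl fun w' _ => by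
                rw [abs_mul, abs_of_nonneg (hG0 w w' z)]
    _ = ∑ w, ∑ w', (1 / 2) * ∑ z : ∀ j, Fq j, G w w' z * |D w w' (z ℓ)| := by
        rw [show (∑ z : ∀ j, Fq j, ∑ w, ∑ w', G w w' z * |D w w' (z ℓ)|)
            = ∑ w, ∑ w', ∑ z : ∀ j, Fq j, G w w' z * |D w w' (z ℓ)| from by
          rw [Finset.sum_comm]
          exact Finset.sum_congr rfl fun w _ => Finset.sum_comm]
        rw [Finset.mul_sum]
        exact Finset.sum_congr rfl fun w _ => by rw [Finset.mul_sum]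
    _ = ∑ w, ∑ w', (1 / 2) * ∑ ζ : Fq ℓ, |D w w' ζ| :=
        Finset.sum_congr rfl fun w _ => Finset.sum_congr rfl fun w' _ => by rw [hzsum w w']
    _ ≤ ∑ w, ∑ w', p1 w * p2 w' * C :=
        Finset.sum_le_sum fun w _ => Finset.sum_le_sum fun w' _ => hblock w w'
    _ = C := by
        have hrow : ∀ w, (∑ w', p1 w * p2 w' * C) = p1 w * C := by
          intro w
          calc (∑ w', p1 w * p2 w' * C) = ∑ w', (p1 w * C) * p2 w' :=
                Finset.sum_congr rfl fun w' _ => by ring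
            _ = (p1 w * C) * ∑ w', p2 w' := by rw [Finset.mul_sum]
            _ = p1 w * C := by rw [hp2sum, mul_one]
        rw [Finset.sum_congr rfl fun w _ => hrow w, ← Finset.sum_mul, hp1sum, one_mul]


end Stmt9Aux



/-- Online extractor with incremental block lengths (classical side
information). Let `k, n ≥ 1`, `q_ℓ ≥ 1`, `1/2 < δ ≤ 1`, and let `F_ℓ` be the finite field
with `2^{q_ℓ}` elements. Let `X = (X⁽¹⁾,…,X⁽ᵏ⁾)` and `Y = (Y⁽¹⁾,…,Y⁽ᵏ⁾)` be independent
(the joint distribution being the product of the distributions `PX` and `PY`), with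
`X⁽ℓ⁾, Y⁽ℓ⁾` valued in `F_ℓⁿ`, and suppose both satisfy the forward block condition with
rate `δ`: each block has conditional probability at most `2^{−δ q_ℓ n}` of any value, given
any assignment of the previous blocks. Let `Z⁽ℓ⁾ = Ext_IP(X⁽ℓ⁾, Y⁽ℓ⁾) = Σᵢ X⁽ℓ⁾ᵢ Y⁽ℓ⁾ᵢ`.
Then `(Z⁽¹⁾,…,Z⁽ᵏ⁾)` is within statistical distance `Σ_ℓ 2^{2q_ℓ} · 2^{−(2δ−1) q_ℓ n / 2}`
of the uniform distribution on `F₁ × ⋯ × F_k`. -/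
theorem stmt_9 (k n : ℕ) (hk : 1 ≤ k) (hn : 1 ≤ n)
    (qv : Fin k → ℕ) (hqv : ∀ ℓ, 1 ≤ qv ℓ)
    (δ : ℝ) (hδ : 1 / 2 < δ) (hδ1 : δ ≤ 1)
    (Fq : Fin k → Type*) [∀ ℓ, Field (Fq ℓ)] [∀ ℓ, Fintype (Fq ℓ)] [∀ ℓ, DecidableEq (Fq ℓ)]
    (hcard : ∀ ℓ, Fintype.card (Fq ℓ) = 2 ^ qv ℓ)
    (PX PY : (∀ ℓ, Fin n → Fq ℓ) → ℝ)
    (hPX0 : ∀ a, 0 ≤ PX a) (hPX1 : ∑ a, PX a = 1)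
    (hPY0 : ∀ a, 0 ≤ PY a) (hPY1 : ∑ a, PY a = 1)
    (hXblock : ∀ (ℓ : Fin k) (w : ∀ j, Fin n → Fq j) (v : Fin n → Fq ℓ),
      (∑ a ∈ Finset.univ.filter
          (fun a : ∀ j, Fin n → Fq j => (∀ j < ℓ, a j = w j) ∧ a ℓ = v), PX a)
        ≤ (2 : ℝ) ^ (-(δ * qv ℓ * n)) *
          ∑ a ∈ Finset.univ.filter (fun a : ∀ j, Fin n → Fq j => ∀ j < ℓ, a j = w j), PX a)
    (hYblock : ∀ (ℓ : Fin k) (w : ∀ j, Fin n → Fq j) (v : Fin n → Fq ℓ),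
      (∑ a ∈ Finset.univ.filter
          (fun a : ∀ j, Fin n → Fq j => (∀ j < ℓ, a j = w j) ∧ a ℓ = v), PY a)
        ≤ (2 : ℝ) ^ (-(δ * qv ℓ * n)) *
          ∑ a ∈ Finset.univ.filter (fun a : ∀ j, Fin n → Fq j => ∀ j < ℓ, a j = w j), PY a) :
    (1 / 2) * ∑ z : ∀ ℓ, Fq ℓ,
        |(∑ x : ∀ ℓ, Fin n → Fq ℓ, ∑ y : ∀ ℓ, Fin n → Fq ℓ,
            PX x * PY y * (if ∀ ℓ, (∑ i, x ℓ i * y ℓ i) = z ℓ then (1 : ℝ) else 0))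
          - (∏ ℓ, (2 : ℝ) ^ qv ℓ)⁻¹|
      ≤ ∑ ℓ, (2 : ℝ) ^ (2 * (qv ℓ : ℝ)) * (2 : ℝ) ^ (-(2 * δ - 1) * qv ℓ * n / 2) := by
  classical
  -- identify the two ends of the hybrid chain
  have hHk : ∀ z : ∀ ℓ, Fq ℓ, Stmt9Aux.Hyb k n Fq PX PY k z
      = ∑ x : ∀ ℓ, Fin n → Fq ℓ, ∑ y : ∀ ℓ, Fin n → Fq ℓ,
          PX x * PY y * (if ∀ ℓ, (∑ i, x ℓ i * y ℓ i) = z ℓ then (1 : ℝ) else 0) := by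
    intro z
    simp only [Stmt9Aux.Hyb]
    refine Finset.sum_congr rfl fun x _ => Finset.sum_congr rfl fun y _ => ?_
    congr 1
    have hlt : ∀ j : Fin k, ((j : ℕ) < k) := fun j => j.isLt
    rw [Finset.prod_congr rfl fun j (_ : j ∈ Finset.univ) => if_pos (hlt j)]
    rw [Finset.prod_boole]
    simp
  have hH0 : ∀ z : ∀ ℓ, Fq ℓ, Stmt9Aux.Hyb k n Fq PX PY 0 z = (∏ ℓ, (2 : ℝ) ^ qv ℓ)⁻¹ := by
    intro z
    simp only [Stmt9Aux.Hyb]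
    have h1 : ∀ (x y : ∀ ℓ, Fin n → Fq ℓ),
        (∏ j : Fin k, (if (j : ℕ) < 0 then (if (∑ i, x j i * y j i) = z j then (1 : ℝ) else 0)
          else (Fintype.card (Fq j) : ℝ)⁻¹)) = (∏ ℓ, (2 : ℝ) ^ qv ℓ)⁻¹ := by
      intro x y
      rw [Finset.prod_congr rfl fun j (_ : j ∈ Finset.univ) => if_neg (Nat.not_lt_zero _)]
      rw [← Finset.prod_inv_distrib]
      refine Finset.prod_congr rfl fun j _ => ?_
      rw [hcard j]
      push_cast
      ring
    calc ∑ x : ∀ ℓ, Fin n → Fq ℓ, ∑ y : ∀ ℓ, Fin n → Fq ℓ, PX x * PY y *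
          (∏ j : Fin k, (if (j : ℕ) < 0 then (if (∑ i, x j i * y j i) = z j then (1 : ℝ) else 0)
            else (Fintype.card (Fq j) : ℝ)⁻¹))
        = ∑ x : ∀ ℓ, Fin n → Fq ℓ, ∑ y : ∀ ℓ, Fin n → Fq ℓ, PX x * PY y *
            (∏ ℓ, (2 : ℝ) ^ qv ℓ)⁻¹ :=
          Finset.sum_congr rfl fun x _ => Finset.sum_congr rfl fun y _ => by rw [h1 x y]
      _ = (∏ ℓ, (2 : ℝ) ^ qv ℓ)⁻¹ := by
          have : ∀ x : ∀ ℓ, Fin n → Fq ℓ,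
              (∑ y : ∀ ℓ, Fin n → Fq ℓ, PX x * PY y * (∏ ℓ, (2 : ℝ) ^ qv ℓ)⁻¹)
              = PX x * (∏ ℓ, (2 : ℝ) ^ qv ℓ)⁻¹ := by
            intro x
            calc (∑ y : ∀ ℓ, Fin n → Fq ℓ, PX x * PY y * (∏ ℓ, (2 : ℝ) ^ qv ℓ)⁻¹)
                = (∑ y : ∀ ℓ, Fin n → Fq ℓ, PY y) * (PX x * (∏ ℓ, (2 : ℝ) ^ qv ℓ)⁻¹) := by
                  rw [Finset.sum_mul]
                  exact Finset.sum_congr rfl fun y _ => by ring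
              _ = PX x * (∏ ℓ, (2 : ℝ) ^ qv ℓ)⁻¹ := by rw [hPY1, one_mul]
          rw [Finset.sum_congr rfl fun x _ => this x, ← Finset.sum_mul, hPX1, one_mul]
  have hstep := Stmt9Aux.step k n qv hqv δ Fq hcard PX PY hPX0 hPX1 hPY0 hPY1 hXblock hYblock
  calc (1 / 2) * ∑ z : ∀ ℓ, Fq ℓ,
        |(∑ x : ∀ ℓ, Fin n → Fq ℓ, ∑ y : ∀ ℓ, Fin n → Fq ℓ,
            PX x * PY y * (if ∀ ℓ, (∑ i, x ℓ i * y ℓ i) = z ℓ then (1 : ℝ) else 0))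
          - (∏ ℓ, (2 : ℝ) ^ qv ℓ)⁻¹|
      = (1 / 2) * ∑ z : ∀ ℓ, Fq ℓ,
          |Stmt9Aux.Hyb k n Fq PX PY k z - Stmt9Aux.Hyb k n Fq PX PY 0 z| := by
        refine congrArg (fun t => (1 / 2 : ℝ) * t) (Finset.sum_congr rfl fun z _ => ?_)
        rw [hHk z, hH0 z]
    _ ≤ (1 / 2) * ∑ z : ∀ ℓ, Fq ℓ, ∑ m ∈ Finset.range k,
          |Stmt9Aux.Hyb k n Fq PX PY (m + 1) z - Stmt9Aux.Hyb k n Fq PX PY m z| := by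
        refine mul_le_mul_of_nonneg_left (Finset.sum_le_sum fun z _ => ?_) (by norm_num)
        rw [← Finset.sum_range_sub (fun m => Stmt9Aux.Hyb k n Fq PX PY m z) k]
        exact Finset.abs_sum_le_sum_abs _ _
    _ = ∑ m ∈ Finset.range k, (1 / 2) * ∑ z : ∀ ℓ, Fq ℓ,
          |Stmt9Aux.Hyb k n Fq PX PY (m + 1) z - Stmt9Aux.Hyb k n Fq PX PY m z| := by
        rw [Finset.sum_comm, Finset.mul_sum]
    _ = ∑ ℓ : Fin k, (1 / 2) * ∑ z : ∀ j, Fq j,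
          |Stmt9Aux.Hyb k n Fq PX PY (ℓ.val + 1) z - Stmt9Aux.Hyb k n Fq PX PY ℓ.val z| :=
        (Fin.sum_univ_eq_sum_range (fun m => (1 / 2) * ∑ z : ∀ ℓ, Fq ℓ,
          |Stmt9Aux.Hyb k n Fq PX PY (m + 1) z - Stmt9Aux.Hyb k n Fq PX PY m z|) k).symm
    _ ≤ ∑ ℓ, (2 : ℝ) ^ (2 * (qv ℓ : ℝ)) * (2 : ℝ) ^ (-(2 * δ - 1) * qv ℓ * n / 2) :=
        Finset.sum_le_sum fun ℓ _ => hstep ℓ
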